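/- For k ∈ (0,1), ⟨φ̃, dn⟩ := ∫_{−K}^{K} [k²·sn z·cn z·(K·E(z,k) − E·z) + (E−K)·dn z + k²·K·cn²z·dn z]·dn z dz = E² + (k²−1)K². In particular this integral is strictly positive, so the inhomogeneous equation L₋f = φ̃ has no periodic solution. -/

import Mathlib

open MeasureTheory Real

private lemma const_of_hasDerivAt_zero {g : ℝ → ℝ} (h : ∀ x, HasDerivAt g 0 x) (x y : ℝ) :
    g x = g y :=
  is_const_of_deriv_eq_zero (fun z => (h z).differentiableAt) (fun z => (h z).deriv) x y


private lemma integral_even_fun {g : ℝ → ℝ} (hg : ∀ t, g (-t) = g t) (x : ℝ) :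
    (∫ t in (0:ℝ)..(-x), g t) = - ∫ t in (0:ℝ)..x, g t := by
  have h1 : (∫ t in (0:ℝ)..x, g (-t)) = ∫ t in (-x)..(-(0:ℝ)), g t :=
    intervalIntegral.integral_comp_neg (a := (0:ℝ)) (b := x) (f := g)
  rw [neg_zero] at h1
  simp only [hg] at h1
  rw [h1]
  exact intervalIntegral.integral_symm _ _

private lemma ftc_hasDerivAt {g : ℝ → ℝ} (hg : Continuous g) (z : ℝ) :
    HasDerivAt (fun u => ∫ y in (0:ℝ)..u, g y) (g z) z :=
  intervalIntegral.integral_hasDerivAt_right (hg.intervalIntegrable _ _)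
    (hg.stronglyMeasurable.stronglyMeasurableAtFilter) hg.continuousAt



/-- Complete elliptic integral of the first kind. -/
noncomputable def ellipticK (k : ℝ) : ℝ :=
  ∫ θ in (0:ℝ)..(Real.pi / 2), 1 / Real.sqrt (1 - k ^ 2 * Real.sin θ ^ 2)

/-- Complete elliptic integral of the second kind. -/
noncomputable def ellipticE (k : ℝ) : ℝ :=
  ∫ θ in (0:ℝ)..(Real.pi / 2), Real.sqrt (1 - k ^ 2 * Real.sin θ ^ 2)

/-- The operator L₋f = −f'' − (2 dn²z + k² − 2)f. -/
noncomputable def Lm (k : ℝ) (dn : ℝ → ℝ) (f : ℝ → ℝ) : ℝ → ℝ :=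
  fun z => -(deriv (deriv f) z) - (2 * dn z ^ 2 + k ^ 2 - 2) * f z

/-- The operator L₊f = −f'' − (6 dn²z + k² − 2)f. -/
noncomputable def Lp (k : ℝ) (dn : ℝ → ℝ) (f : ℝ → ℝ) : ℝ → ℝ :=
  fun z => -(deriv (deriv f) z) - (6 * dn z ^ 2 + k ^ 2 - 2) * f z

set_option maxHeartbeats 2000000 in
/-- ⟨φ̃, dn⟩ = E² + (k²−1)K² > 0, hence L₋f = φ̃ has no periodic solution. -/
theorem stmt_7 (k : ℝ) (hk0 : 0 < k) (hk1 : k < 1)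
    (sn cn dn : ℝ → ℝ)
    (hsn0 : sn 0 = 0) (hcn0 : cn 0 = 1) (hdn0 : dn 0 = 1)
    (hsn' : ∀ z, HasDerivAt sn (cn z * dn z) z)
    (hcn' : ∀ z, HasDerivAt cn (-(sn z * dn z)) z)
    (hdn' : ∀ z, HasDerivAt dn (-(k ^ 2 * sn z * cn z)) z)
    (φt : ℝ → ℝ)
    (hφt : ∀ z, φt z = k ^ 2 * sn z * cn z *
        (ellipticK k * (∫ y in (0:ℝ)..z, dn y ^ 2) - ellipticE k * z)
      + (ellipticE k - ellipticK k) * dn z + k ^ 2 * ellipticK k * cn z ^ 2 * dn z) :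
    (∫ z in (-ellipticK k)..(ellipticK k), φt z * dn z
        = ellipticE k ^ 2 + (k ^ 2 - 1) * ellipticK k ^ 2) ∧
    (0 < ∫ z in (-ellipticK k)..(ellipticK k), φt z * dn z) ∧
    ¬ ∃ f : ℝ → ℝ, ContDiff ℝ 2 f ∧ (∀ z, f (z + 2 * ellipticK k) = f z) ∧
        ∀ z, Lm k dn f z = φt z := by
  have hsnc : Continuous sn := continuous_iff_continuousAt.2 fun z => (hsn' z).continuousAt
  have hcnc : Continuous cn := continuous_iff_continuousAt.2 fun z => (hcn' z).continuousAt
  have hdnc : Continuous dn := continuous_iff_continuousAt.2 fun z => (hdn' z).continuousAt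
  -- pythagoras
  have hpyth : ∀ z, sn z ^ 2 + cn z ^ 2 = 1 := by
    intro z
    have h : ∀ x, HasDerivAt (fun w => sn w ^ 2 + cn w ^ 2) 0 x := by
      intro x
      have h := ((hsn' x).pow 2).add ((hcn' x).pow 2)
      refine h.congr_deriv (Eq.symm ?_)
      push_cast
      ring
    have := const_of_hasDerivAt_zero h z 0
    simpa [hsn0, hcn0] using this
  have hdn2 : ∀ z, dn z ^ 2 = 1 - k ^ 2 * sn z ^ 2 := by
    intro z
    have h : ∀ x, HasDerivAt (fun w => k ^ 2 * sn w ^ 2 + dn w ^ 2) 0 x := by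
      intro x
      have h := (((hsn' x).pow 2).const_mul (k ^ 2)).add ((hdn' x).pow 2)
      refine h.congr_deriv (Eq.symm ?_)
      push_cast
      ring
    have := const_of_hasDerivAt_zero h z 0
    simp [hsn0, hdn0] at this
    linarith
  have hdnpos : ∀ z, 0 < dn z := by
    have hne : ∀ z, dn z ≠ 0 := by
      intro z hz
      have h1 := hpyth z
      have h2 := hdn2 z
      rw [hz] at h2
      nlinarith [sq_nonneg (cn z), sq_nonneg (sn z)]
    intro z
    by_contra hle
    push_neg at hle
    have hlt : dn z < 0 := lt_of_le_of_ne hle (hne z)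
    have : (0:ℝ) ∈ Set.uIcc (dn z) (dn 0) := by
      rw [hdn0]
      exact Set.mem_uIcc.2 (Or.inl ⟨hlt.le, zero_le_one⟩)
    obtain ⟨c, _, hc⟩ := intermediate_value_uIcc (hdnc.continuousOn (s := Set.uIcc z 0)) this
    exact hne c hc
   -- amplitude
  set θf : ℝ → ℝ := fun z => ∫ y in (0:ℝ)..z, dn y with hθdef
  have hθ' : ∀ z, HasDerivAt θf (dn z) z := fun z => ftc_hasDerivAt hdnc z
  have hθ0 : θf 0 = 0 := intervalIntegral.integral_same
  have hsncn : ∀ z, sn z = Real.sin (θf z) ∧ cn z = Real.cos (θf z) := by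
    have hD : ∀ x, HasDerivAt
        (fun w => (sn w - Real.sin (θf w)) ^ 2 + (cn w - Real.cos (θf w)) ^ 2) 0 x := by
      intro x
      have hsin : HasDerivAt (fun w => Real.sin (θf w)) (Real.cos (θf x) * dn x) x :=
        (Real.hasDerivAt_sin (θf x)).comp x (hθ' x)
      have hcos : HasDerivAt (fun w => Real.cos (θf w)) (-Real.sin (θf x) * dn x) x :=
        (Real.hasDerivAt_cos (θf x)).comp x (hθ' x)
      have h := (((hsn' x).sub hsin).pow 2).add (((hcn' x).sub hcos).pow 2)
      refine h.congr_deriv (Eq.symm ?_)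
      simp only [Pi.sub_apply]
      push_cast
      ring
    intro z
    have h0 := const_of_hasDerivAt_zero hD z 0
    rw [hθ0, hsn0, hcn0] at h0
    simp at h0
    constructor <;> nlinarith [sq_nonneg (sn z - Real.sin (θf z)), sq_nonneg (cn z - Real.cos (θf z))]
  have hsnθ : ∀ z, sn z = Real.sin (θf z) := fun z => (hsncn z).1
  have hcnθ : ∀ z, cn z = Real.cos (θf z) := fun z => (hsncn z).2
  have hdnθ : ∀ z, dn z = Real.sqrt (1 - k ^ 2 * Real.sin (θf z) ^ 2) := by
    intro z
    rw [← hsnθ z, ← hdn2 z, Real.sqrt_sq (hdnpos z).le]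
  -- the incomplete elliptic integral F
  have hbase : ∀ t : ℝ, 0 < 1 - k ^ 2 * Real.sin t ^ 2 := by
    intro t
    nlinarith [Real.sin_sq_le_one t, sq_nonneg (Real.sin t), sq_nonneg k]
  set F : ℝ → ℝ := fun x => ∫ t in (0:ℝ)..x, 1 / Real.sqrt (1 - k ^ 2 * Real.sin t ^ 2)
    with hFdef
  have hgc : Continuous (fun t : ℝ => 1 / Real.sqrt (1 - k ^ 2 * Real.sin t ^ 2)) := by
    apply continuous_const.div
    · fun_prop
    · intro t
      exact (Real.sqrt_pos.mpr (hbase t)).ne'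
  have hF' : ∀ t, HasDerivAt F (1 / Real.sqrt (1 - k ^ 2 * Real.sin t ^ 2)) t :=
    fun t => ftc_hasDerivAt hgc t
  have hFmono : StrictMono F := by
    apply strictMono_of_deriv_pos
    intro t
    rw [(hF' t).deriv]
    exact one_div_pos.mpr (Real.sqrt_pos.mpr (hbase t))
  have hF0 : F 0 = 0 := intervalIntegral.integral_same
  have hFθ : ∀ z, F (θf z) = z := by
    have hG : ∀ x, HasDerivAt (fun w => F (θf w) - w) 0 x := by
      intro x
      have h := ((hF' (θf x)).comp x (hθ' x)).sub (hasDerivAt_id x)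
      refine h.congr_deriv (Eq.symm ?_)
      rw [hdnθ x]
      have hne := (Real.sqrt_pos.mpr (hbase (θf x))).ne'
      field_simp
      ring
    intro z
    have := const_of_hasDerivAt_zero hG z 0
    rw [hθ0, hF0] at this
    simp at this
    linarith
  have hKF : ellipticK k = F (π / 2) := rfl
  have hK0 : 0 < ellipticK k := by
    rw [hKF, ← hF0]
    exact hFmono (by positivity)
  -- oddness of F
  have hFodd : ∀ x, F (-x) = -F x := fun x =>
    integral_even_fun (fun t => by rw [Real.sin_neg, neg_sq]) x
  have hθK : θf (ellipticK k) = π / 2 := by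
    apply hFmono.injective
    rw [hFθ, hKF]
  have hθmK : θf (-ellipticK k) = -(π / 2) := by
    apply hFmono.injective
    rw [hFθ, hFodd, hKF]
  -- values at ±K
  have hsnK : sn (ellipticK k) = 1 := by rw [hsnθ, hθK, Real.sin_pi_div_two]
  have hcnK : cn (ellipticK k) = 0 := by rw [hcnθ, hθK, Real.cos_pi_div_two]
  have hsnmK : sn (-ellipticK k) = -1 := by
    rw [hsnθ, hθmK, Real.sin_neg, Real.sin_pi_div_two]
  have hcnmK : cn (-ellipticK k) = 0 := by
    rw [hcnθ, hθmK, Real.cos_neg, Real.cos_pi_div_two]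
  have hdnKval : dn (ellipticK k) = Real.sqrt (1 - k ^ 2) := by
    rw [hdnθ, hθK, Real.sin_pi_div_two]; norm_num
  have hdnmKval : dn (-ellipticK k) = Real.sqrt (1 - k ^ 2) := by
    rw [hdnθ, hθmK, Real.sin_neg, Real.sin_pi_div_two]; norm_num
  -- H and its values
  set H : ℝ → ℝ := fun z => ∫ y in (0:ℝ)..z, dn y ^ 2 with hHdef
  have hH' : ∀ z, HasDerivAt H (dn z ^ 2) z := fun z => ftc_hasDerivAt (by fun_prop) z
  have hH0 : H 0 = 0 := intervalIntegral.integral_same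
  set G2 : ℝ → ℝ := fun x => ∫ t in (0:ℝ)..x, Real.sqrt (1 - k ^ 2 * Real.sin t ^ 2)
    with hG2def
  have hG2c : Continuous (fun t : ℝ => Real.sqrt (1 - k ^ 2 * Real.sin t ^ 2)) := by fun_prop
  have hG2' : ∀ t, HasDerivAt G2 (Real.sqrt (1 - k ^ 2 * Real.sin t ^ 2)) t :=
    fun t => ftc_hasDerivAt hG2c t
  have hG20 : G2 0 = 0 := intervalIntegral.integral_same
  have hHθ : ∀ z, H z = G2 (θf z) := by
    have hG : ∀ x, HasDerivAt (fun w => G2 (θf w) - H w) 0 x := by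
      intro x
      have h := ((hG2' (θf x)).comp x (hθ' x)).sub (hH' x)
      refine h.congr_deriv (Eq.symm ?_)
      rw [← hdnθ x]
      ring
    intro z
    have := const_of_hasDerivAt_zero hG z 0
    rw [hθ0, hG20, hH0] at this
    simp at this
    linarith
  have hEG2 : ellipticE k = G2 (π / 2) := rfl
  have hG2odd : ∀ x, G2 (-x) = -G2 x := fun x =>
    integral_even_fun (fun t => by rw [Real.sin_neg, neg_sq]) x
  have hHK : H (ellipticK k) = ellipticE k := by rw [hHθ, hθK, hEG2]
  have hHmK : H (-ellipticK k) = -ellipticE k := by rw [hHθ, hθmK, hG2odd, hEG2]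
  -- hypothetical φt for testing
  set Kk := ellipticK k with hKkdef
  set Ek := ellipticE k with hEkdef
  set Φ : ℝ → ℝ := fun z =>
      -(dn z ^ 2 / 2) * (Kk * H z - Ek * z) + Kk * k ^ 2 / 2 * (sn z * cn z * dn z)
        + Ek / 2 * H z - Kk * (1 - k ^ 2) / 2 * z with hΦdef
  have hφtdn : ∀ z : ℝ,
      (k ^ 2 * sn z * cn z * (Kk * H z - Ek * z)
        + (Ek - Kk) * dn z + k ^ 2 * Kk * cn z ^ 2 * dn z) * dn z
      = (-(2 * dn z * -(k ^ 2 * sn z * cn z) / 2) * (Kk * H z - Ek * z)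
          + -(dn z ^ 2 / 2) * (Kk * dn z ^ 2 - Ek * 1))
        + Kk * k ^ 2 / 2 * ((cn z * dn z * cn z + sn z * -(sn z * dn z)) * dn z
            + sn z * cn z * -(k ^ 2 * sn z * cn z))
        + Ek / 2 * dn z ^ 2 - Kk * (1 - k ^ 2) / 2 * 1 := by
    intro z
    have c2 : cn z ^ 2 = 1 - sn z ^ 2 := by linarith [hpyth z]
    have d2 : dn z ^ 2 = 1 - k ^ 2 * sn z ^ 2 := hdn2 z
    linear_combination (Kk * k ^ 2 / 2 * (dn z ^ 2 + k ^ 2 * sn z ^ 2)) * c2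
      + (Kk * (dn z ^ 2 - k ^ 2 * sn z ^ 2 - 1 + k ^ 2) / 2) * d2
  have hΦ' : ∀ z : ℝ, HasDerivAt Φ
      ((k ^ 2 * sn z * cn z * (Kk * H z - Ek * z)
        + (Ek - Kk) * dn z + k ^ 2 * Kk * cn z ^ 2 * dn z) * dn z) z := by
    intro z
    rw [hφtdn z]
    have h1 : HasDerivAt (fun w => -(dn w ^ 2 / 2)) (-(2 * dn z * -(k ^ 2 * sn z * cn z) / 2)) z := by
      have := ((hdn' z).pow 2).div_const 2
      have h2 := this.neg
      refine h2.congr_deriv (Eq.symm ?_)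
      push_cast
      ring
    have hb : HasDerivAt (fun w => Kk * H w - Ek * w) (Kk * dn z ^ 2 - Ek * 1) z :=
      ((hH' z).const_mul Kk).sub ((hasDerivAt_id z).const_mul Ek)
    have hterm1 := h1.mul hb
    have hterm2 := (((hsn' z).mul (hcn' z)).mul (hdn' z)).const_mul (Kk * k ^ 2 / 2)
    have hterm3 := (hH' z).const_mul (Ek / 2)
    have hterm4 := (hasDerivAt_id z).const_mul (Kk * (1 - k ^ 2) / 2)
    exact ((hterm1.add hterm2).add hterm3).sub hterm4
  -- part 2 : positivity
  have hc0 : (0:ℝ) ≤ 1 - k ^ 2 := by nlinarith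
  have hsq : Real.sqrt (1 - k ^ 2) ^ 2 = 1 - k ^ 2 := Real.sq_sqrt hc0
  have hΨ' : ∀ z, HasDerivAt (fun w => k ^ 2 * (sn w * cn w / dn w))
      (dn z ^ 2 - (1 - k ^ 2) / dn z ^ 2) z := by
    intro z
    have h := (((hsn' z).mul (hcn' z)).div (hdn' z) (hdnpos z).ne').const_mul (k ^ 2)
    refine h.congr_deriv (Eq.symm ?_)
    simp only [Pi.mul_apply]
    have c2 : cn z ^ 2 = 1 - sn z ^ 2 := by linarith [hpyth z]
    have d2 : dn z ^ 2 = 1 - k ^ 2 * sn z ^ 2 := hdn2 z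
    have hdne : dn z ≠ 0 := (hdnpos z).ne'
    field_simp
    ring_nf
    linear_combination (-(k ^ 2) * (dn z ^ 2 + k ^ 2 * sn z ^ 2)) * c2
      + (1 + dn z ^ 2 - k ^ 2 + k ^ 2 * sn z ^ 2) * d2
  have hinvc : Continuous (fun z => (1 - k ^ 2) / dn z ^ 2) := by
    apply continuous_const.div (by fun_prop)
    intro z
    exact pow_ne_zero _ (hdnpos z).ne'
  have hdn2c : Continuous (fun z => dn z ^ 2) := by fun_prop
  have hzero : (∫ z in (0:ℝ)..Kk, (dn z ^ 2 - (1 - k ^ 2) / dn z ^ 2)) = 0 := by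
    rw [intervalIntegral.integral_eq_sub_of_hasDerivAt (fun x _ => hΨ' x)
      ((hdn2c.sub hinvc).intervalIntegrable _ _)]
    rw [hcnK, hsn0]
    ring
  have hIdn2 : (∫ z in (0:ℝ)..Kk, dn z ^ 2) = Ek := hHK
  have hIinv : (∫ z in (0:ℝ)..Kk, (1 - k ^ 2) / dn z ^ 2) = Ek := by
    rw [intervalIntegral.integral_sub (hdn2c.intervalIntegrable _ _)
      (hinvc.intervalIntegrable _ _)] at hzero
    rw [hIdn2] at hzero
    linarith
  have hgint : (∫ z in (0:ℝ)..Kk, (dn z ^ 2 + (1 - k ^ 2) / dn z ^ 2) / 2) = Ek := by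
    rw [intervalIntegral.integral_div, intervalIntegral.integral_add
      (hdn2c.intervalIntegrable _ _) (hinvc.intervalIntegrable _ _), hIdn2, hIinv]
    ring
  have hsqrt1 : Real.sqrt (1 - k ^ 2) < 1 := by
    exact (Real.sqrt_lt' one_pos).2 (by nlinarith)
  have hlt : Real.sqrt (1 - k ^ 2) * Kk < Ek := by
    have hconst : (∫ _z in (0:ℝ)..Kk, Real.sqrt (1 - k ^ 2)) = Real.sqrt (1 - k ^ 2) * Kk := by
      simp [mul_comm]
    rw [← hconst, ← hgint]
    apply intervalIntegral.integral_lt_integral_of_continuousOn_of_le_of_exists_lt hK0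
      continuousOn_const ((hdn2c.add hinvc).div_const 2).continuousOn
    · intro x _
      have hd := hdnpos x
      have hdne : dn x ^ 2 ≠ 0 := pow_ne_zero _ hd.ne'
      have hiden : (dn x ^ 2 + (1 - k ^ 2) / dn x ^ 2) / 2 - Real.sqrt (1 - k ^ 2)
          = (dn x ^ 2 - Real.sqrt (1 - k ^ 2)) ^ 2 / (2 * dn x ^ 2) := by
        field_simp
        linear_combination (-1:ℝ) * hsq
      simp only [Pi.add_apply]
      linarith [div_nonneg (sq_nonneg (dn x ^ 2 - Real.sqrt (1 - k ^ 2)))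
        (by positivity : (0:ℝ) ≤ 2 * dn x ^ 2), hiden]
    · refine ⟨0, ⟨le_rfl, hK0.le⟩, ?_⟩
      simp only [Pi.add_apply]
      rw [hdn0]
      norm_num
      nlinarith [sq_nonneg (1 - Real.sqrt (1 - k ^ 2)), hsqrt1]
  have hpos : 0 < Ek ^ 2 + (k ^ 2 - 1) * Kk ^ 2 := by
    have h1 : 0 ≤ Real.sqrt (1 - k ^ 2) * Kk :=
      mul_nonneg (Real.sqrt_nonneg _) hK0.le
    nlinarith [mul_pos (sub_pos.mpr hlt)
      (show 0 < Ek + Real.sqrt (1 - k ^ 2) * Kk by nlinarith)]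
  -- part 3 machinery (with abstract f)
  have hpart3 : ∀ f : ℝ → ℝ, ContDiff ℝ 2 f → (∀ z, f (z + 2 * Kk) = f z) →
      (∫ z in (-Kk)..Kk, (-(deriv (deriv f) z) - (2 * dn z ^ 2 + k ^ 2 - 2) * f z) * dn z) = 0 := by
    intro f hf2 hper
    have h21 : (2 : WithTop ℕ∞) = 1 + 1 := by norm_num
    have hf1 : ContDiff ℝ 1 (deriv f) := by
      rw [h21] at hf2
      exact (contDiff_succ_iff_deriv.mp hf2).2.2
    have hfd : Differentiable ℝ f := hf2.differentiable (by norm_num)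
    have hfd' : Differentiable ℝ (deriv f) := hf1.differentiable one_ne_zero
    have hf''c : Continuous (deriv (deriv f)) := hf1.continuous_deriv le_rfl
    have hfc : Continuous f := hfd.continuous
    have hf'c : Continuous (deriv f) := hfd'.continuous
    -- second derivative of dn
    have hdnd : ∀ z, HasDerivAt (deriv dn)
        (-(k ^ 2 * ((cn z * dn z) * cn z + sn z * -(sn z * dn z)))) z := by
      intro z
      have hder : deriv dn = fun w => -(k ^ 2 * (sn w * cn w)) :=
        funext fun w => by rw [(hdn' w).deriv]; ring
      rw [hder]
      have h := (((hsn' z).mul (hcn' z)).const_mul (k ^ 2)).neg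
      exact h
    have hvdd : ∀ z, -(k ^ 2 * ((cn z * dn z) * cn z + sn z * -(sn z * dn z)))
        = -((2 * dn z ^ 2 + k ^ 2 - 2) * dn z) := by
      intro z
      have c2 : cn z ^ 2 = 1 - sn z ^ 2 := by linarith [hpyth z]
      have d2 : dn z ^ 2 = 1 - k ^ 2 * sn z ^ 2 := hdn2 z
      linear_combination (-(k ^ 2) * dn z) * c2 + (2 * dn z) * d2
    -- Wronskian-type function
    have hW' : ∀ z, HasDerivAt (fun w => f w * deriv dn w - deriv f w * dn w)
        (f z * -(k ^ 2 * ((cn z * dn z) * cn z + sn z * -(sn z * dn z)))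
          - deriv (deriv f) z * dn z) z := by
      intro z
      have h1 : HasDerivAt f (deriv f z) z := (hfd z).hasDerivAt
      have h2 : HasDerivAt (deriv f) (deriv (deriv f) z) z := (hfd' z).hasDerivAt
      have h := (h1.mul (hdnd z)).sub (h2.mul (hdn' z))
      refine h.congr_deriv (Eq.symm ?_)
      have hder : deriv dn z = -(k ^ 2 * sn z * cn z) := (hdn' z).deriv
      rw [hder]
      ring
    have hcontW : Continuous (fun z => f z * -(k ^ 2 * ((cn z * dn z) * cn z
        + sn z * -(sn z * dn z))) - deriv (deriv f) z * dn z) := by fun_prop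
    have hibp : (∫ z in (-Kk)..Kk,
        (f z * -(k ^ 2 * ((cn z * dn z) * cn z + sn z * -(sn z * dn z)))
          - deriv (deriv f) z * dn z))
        = (f Kk * deriv dn Kk - deriv f Kk * dn Kk)
          - (f (-Kk) * deriv dn (-Kk) - deriv f (-Kk) * dn (-Kk)) := by
      exact intervalIntegral.integral_eq_sub_of_hasDerivAt (fun x _ => hW' x)
        (hcontW.intervalIntegrable _ _)
    -- boundary values
    have hdn'K : deriv dn Kk = 0 := by rw [(hdn' Kk).deriv, hcnK]; ring
    have hdn'mK : deriv dn (-Kk) = 0 := by rw [(hdn' (-Kk)).deriv, hcnmK]; ring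
    have hf'per : deriv f Kk = deriv f (-Kk) := by
      have hshift : HasDerivAt (fun z => f (z + 2 * Kk)) (deriv f (-Kk + 2 * Kk) * 1) (-Kk) :=
        (hfd (-Kk + 2 * Kk)).hasDerivAt.comp (-Kk) ((hasDerivAt_id (-Kk)).add_const (2 * Kk))
      have heq : (fun z => f (z + 2 * Kk)) = f := funext hper
      rw [heq] at hshift
      rw [show -Kk + 2 * Kk = Kk by ring] at hshift
      have h0 := hshift.deriv
      simp at h0
      exact h0.symm
    have hBd : (f Kk * deriv dn Kk - deriv f Kk * dn Kk)
        - (f (-Kk) * deriv dn (-Kk) - deriv f (-Kk) * dn (-Kk)) = 0 := by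
      rw [hdn'K, hdn'mK, hf'per, hdnKval, hdnmKval]
      ring
    have hptwise : ∀ z, (-(deriv (deriv f) z) - (2 * dn z ^ 2 + k ^ 2 - 2) * f z) * dn z
        = f z * -(k ^ 2 * ((cn z * dn z) * cn z + sn z * -(sn z * dn z)))
          - deriv (deriv f) z * dn z := by
      intro z
      rw [hvdd z]
      ring
    rw [intervalIntegral.integral_congr (g := fun z =>
      (f z * -(k ^ 2 * ((cn z * dn z) * cn z + sn z * -(sn z * dn z)))
        - deriv (deriv f) z * dn z)) (fun x _ => hptwise x)]
    rw [hibp, hBd]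
  -- assemble the three parts
  have hHapp : ∀ z : ℝ, (∫ y in (0:ℝ)..z, dn y ^ 2) = H z := fun z => rfl
  have hval : ∀ z, φt z * dn z
      = (k ^ 2 * sn z * cn z * (Kk * H z - Ek * z) + (Ek - Kk) * dn z
          + k ^ 2 * Kk * cn z ^ 2 * dn z) * dn z := by
    intro z
    rw [hφt z, hHapp z]
  have hHc : Continuous H := continuous_iff_continuousAt.2 fun z => (hH' z).continuousAt
  have hcontφt : Continuous fun z => φt z * dn z := by
    have hfe : (fun z => φt z * dn z) = fun z =>
        (k ^ 2 * sn z * cn z * (Kk * H z - Ek * z) + (Ek - Kk) * dn z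
          + k ^ 2 * Kk * cn z ^ 2 * dn z) * dn z := funext fun z => hval z
    rw [hfe]
    fun_prop
  have hmain : (∫ z in (-Kk)..Kk, φt z * dn z) = Ek ^ 2 + (k ^ 2 - 1) * Kk ^ 2 := by
    have h1 : (∫ z in (-Kk)..Kk, φt z * dn z) = Φ Kk - Φ (-Kk) := by
      apply intervalIntegral.integral_eq_sub_of_hasDerivAt
      · intro x _
        exact (hΦ' x).congr_deriv (hval x).symm
      · exact hcontφt.intervalIntegrable _ _
    rw [h1, hΦdef]
    simp only
    rw [hsnK, hcnK, hsnmK, hcnmK, hHK, hHmK]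
    ring
  refine ⟨hmain, by rw [hmain]; exact hpos, ?_⟩
  rintro ⟨f, hf2, hper, hLm⟩
  have h0 := hpart3 f hf2 hper
  have h2 : (fun z => φt z * dn z) = fun z =>
      (-(deriv (deriv f) z) - (2 * dn z ^ 2 + k ^ 2 - 2) * f z) * dn z :=
    funext fun x => by rw [← hLm x]; rfl
  have heq : (∫ z in (-Kk)..Kk, φt z * dn z) = 0 := by
    rw [h2, h0]
  rw [heq] at hmain
  linarith [hpos]
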